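/- For every n ≥ 1 and every σ ∈ S_n, c_{σ̄} = (−1)^{n−1}·c_σ, where σ̄ = (σ(n), σ(n−1), …, σ(1)) is the reversal of the word σ. -/

import Mathlib

open MvPolynomial

/-- Narayana number T(n,k) = (1/k)·C(n−1,k−1)·C(n,k−1). -/
def narayana (n k : ℕ) : ℕ := ((n - 1).choose (k - 1) * n.choose (k - 1)) / k

/-- ca_n(a,b), with a = X 0, b = X 1. -/
noncomputable def caP (n : ℕ) : MvPolynomial (Fin 2) ℤ :=
  ∑ i ∈ Finset.range n, (narayana n (i + 1) : MvPolynomial (Fin 2) ℤ) * X 0 ^ i * X 1 ^ (n - 1 - i)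

/-- The standardization of a word with distinct letters: each letter is replaced by its rank. -/
def stdW (w : List ℕ) : List ℕ := w.map fun x => (w.filter (· ≤ x)).length

/-- a_k = a for k ≥ 2, a_1 = 1. -/
noncomputable def aW (k : ℕ) : MvPolynomial (Fin 2) ℤ := if 2 ≤ k then X 0 else 1

/-- b_k = b for k ≥ 2, b_1 = 1. -/
noncomputable def bW (k : ℕ) : MvPolynomial (Fin 2) ℤ := if 2 ≤ k then X 1 else 1

/-- Fuel-based auxiliary for the recursive definition of c_σ on words. -/
noncomputable def cAux : ℕ → List ℕ → MvPolynomial (Fin 2) ℤ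
  | 0, _ => 1
  | f + 1, w =>
    if w.length ≤ 1 then 1
    else
      (∑ k ∈ Finset.Ioo 0 w.length,
        if 1 ∈ w.take k ∧ w.length ∈ w.drop k then
          bW k * aW (w.length - k) * cAux f (stdW (w.take k)) * cAux f (stdW (w.drop k))
        else 0)
      -
      (∑ k ∈ Finset.Ioo 0 w.length,
        if w.length ∈ w.take k ∧ 1 ∈ w.drop k then
          aW k * bW (w.length - k) * cAux f (stdW (w.take k)) * cAux f (stdW (w.drop k))
        else 0)

/-- The polynomial c_σ ∈ ℤ[a,b] of a permutation word σ (a word on {1,…,n}). -/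
noncomputable def cpol (w : List ℕ) : MvPolynomial (Fin 2) ℤ := cAux w.length w

/-- The word σ(1)σ(2)⋯σ(n) ∈ {1,…,n}ⁿ of a permutation σ ∈ S_n. -/
def permWord {n : ℕ} (σ : Equiv.Perm (Fin n)) : List ℕ := List.ofFn fun i => (σ i : ℕ) + 1

/- ---------- auxiliary lemmas ---------- -/

lemma stdW_length (w : List ℕ) : (stdW w).length = w.length := by simp [stdW]

lemma stdW_reverse (w : List ℕ) : stdW w.reverse = (stdW w).reverse := by
  simp [stdW, List.filter_reverse, List.map_reverse]

lemma cAux_fuel : ∀ f g : ℕ, ∀ w : List ℕ, w.length ≤ f → w.length ≤ g →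
    cAux f w = cAux g w := by
  intro f
  induction f with
  | zero =>
    intro g w hf _
    have hw : w.length ≤ 1 := by omega
    cases g with
    | zero => rfl
    | succ g => simp [cAux, hw]
  | succ f ih =>
    intro g w hf hg
    cases g with
    | zero =>
      have hw : w.length ≤ 1 := by omega
      simp [cAux, hw]
    | succ g =>
      by_cases h1 : w.length ≤ 1
      · simp [cAux, h1]
      · simp only [cAux, h1, if_false]
        have hstep : ∀ k ∈ Finset.Ioo 0 w.length,
            cAux f (stdW (w.take k)) = cAux g (stdW (w.take k)) ∧
            cAux f (stdW (w.drop k)) = cAux g (stdW (w.drop k)) := by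
          intro k hk
          simp only [Finset.mem_Ioo] at hk
          have ht : (stdW (w.take k)).length = k := by
            rw [stdW_length, List.length_take]; omega
          have hd : (stdW (w.drop k)).length = w.length - k := by
            rw [stdW_length, List.length_drop]
          constructor
          · exact ih g _ (by omega) (by omega)
          · exact ih g _ (by omega) (by omega)
        congr 1 <;>
        · apply Finset.sum_congr rfl
          intro k hk
          rw [(hstep k hk).1, (hstep k hk).2]

noncomputable def T1f (m : ℕ) (w : List ℕ) (k : ℕ) : MvPolynomial (Fin 2) ℤ :=
  if 1 ∈ w.take k ∧ w.length ∈ w.drop k then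
    bW k * aW (w.length - k) * cAux m (stdW (w.take k)) * cAux m (stdW (w.drop k))
  else 0

noncomputable def T2f (m : ℕ) (w : List ℕ) (k : ℕ) : MvPolynomial (Fin 2) ℤ :=
  if w.length ∈ w.take k ∧ 1 ∈ w.drop k then
    aW k * bW (w.length - k) * cAux m (stdW (w.take k)) * cAux m (stdW (w.drop k))
  else 0

lemma cAux_succ (m : ℕ) (w : List ℕ) (h : ¬ w.length ≤ 1) :
    cAux (m + 1) w =
      (∑ k ∈ Finset.Ioo 0 w.length, T1f m w k) - ∑ k ∈ Finset.Ioo 0 w.length, T2f m w k := by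
  simp only [cAux, h, if_false, T1f, T2f]

lemma sum_Ioo_reflect (n : ℕ) (f : ℕ → MvPolynomial (Fin 2) ℤ) :
    ∑ k ∈ Finset.Ioo 0 n, f (n - k) = ∑ k ∈ Finset.Ioo 0 n, f k := by
  apply Finset.sum_nbij' (i := fun k => n - k) (j := fun k => n - k) <;>
    simp +contextual [Finset.mem_Ioo] <;> omega

lemma cpol_rev_aux : ∀ N : ℕ, ∀ w : List ℕ, w.length ≤ N → 1 ≤ w.length →
    cpol w.reverse = (-1) ^ (w.length + 1) * cpol w := by
  intro N
  induction N with
  | zero => intro w h h1; omega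
  | succ N ih =>
    intro w hN h1
    by_cases h2 : w.length ≤ 1
    · have hw1 : w.length = 1 := by omega
      have hr1 : w.reverse.length = 1 := by simp [hw1]
      rw [cpol, cpol, hr1, hw1]
      simp [cAux, h2]
    · -- main case
      obtain ⟨m, hm⟩ : ∃ m, w.length = m + 1 := ⟨w.length - 1, by omega⟩
      have hn2 : 2 ≤ w.length := by omega
      -- a helper converting cAux m of a reversed standardized factor
      have hconv : ∀ u : List ℕ, 1 ≤ u.length → u.length ≤ m → u.length ≤ N →
          cAux m (stdW u).reverse = (-1) ^ (u.length + 1) * cAux m (stdW u) := by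
        intro u hu1 hum huN
        have hl : (stdW u).reverse.length = u.length := by
          rw [List.length_reverse, stdW_length]
        have hl2 : (stdW u).length = u.length := stdW_length u
        calc cAux m (stdW u).reverse = cpol (stdW u).reverse := by
              rw [cpol, hl]; exact cAux_fuel m u.length _ (by omega) (by omega)
          _ = (-1) ^ ((stdW u).length + 1) * cpol (stdW u) := ih _ (by omega) (by omega)
          _ = (-1) ^ (u.length + 1) * cAux m (stdW u) := by
              rw [hl2, cpol, hl2,
                cAux_fuel u.length m (stdW u) (by omega) (by omega)]
      have key1 : ∀ k ∈ Finset.Ioo 0 w.length,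
          T1f m w.reverse k = (-1) ^ w.length * T2f m w (w.length - k) := by
        intro k hk
        simp only [Finset.mem_Ioo] at hk
        have hd : (w.drop (w.length - k)).length = k := by
          rw [List.length_drop]; omega
        have ht : (w.take (w.length - k)).length = w.length - k := by
          rw [List.length_take]; omega
        have hc2 : cAux m ((stdW (w.drop (w.length - k))).reverse)
            = (-1) ^ ((w.drop (w.length - k)).length + 1)
              * cAux m (stdW (w.drop (w.length - k))) :=
          hconv _ (by omega) (by omega) (by omega)
        have hc3 : cAux m ((stdW (w.take (w.length - k))).reverse)
            = (-1) ^ ((w.take (w.length - k)).length + 1)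
              * cAux m (stdW (w.take (w.length - k))) :=
          hconv _ (by omega) (by omega) (by omega)
        simp only [T1f, T2f, List.length_reverse, List.take_reverse, List.drop_reverse,
          List.mem_reverse, stdW_reverse]
        rw [hc2, hc3, hd, ht, show w.length - (w.length - k) = k by omega]
        by_cases hc : 1 ∈ w.drop (w.length - k) ∧ w.length ∈ w.take (w.length - k)
        · rw [if_pos hc, if_pos ⟨hc.2, hc.1⟩]
          have hsign : ((-1 : MvPolynomial (Fin 2) ℤ)) ^ (k + 1) * (-1) ^ ((w.length - k) + 1)
              = (-1) ^ w.length := by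
            rw [← pow_add, show k + 1 + ((w.length - k) + 1) = w.length + 2 by omega, pow_add]
            ring
          linear_combination (bW k * aW (w.length - k) * cAux m (stdW (w.drop (w.length - k)))
            * cAux m (stdW (w.take (w.length - k)))) * hsign
        · rw [if_neg hc, if_neg (fun h => hc ⟨h.2, h.1⟩), mul_zero]
      have key2 : ∀ k ∈ Finset.Ioo 0 w.length,
          T2f m w.reverse k = (-1) ^ w.length * T1f m w (w.length - k) := by
        intro k hk
        simp only [Finset.mem_Ioo] at hk
        have hd : (w.drop (w.length - k)).length = k := by
          rw [List.length_drop]; omega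
        have ht : (w.take (w.length - k)).length = w.length - k := by
          rw [List.length_take]; omega
        have hc2 : cAux m ((stdW (w.drop (w.length - k))).reverse)
            = (-1) ^ ((w.drop (w.length - k)).length + 1)
              * cAux m (stdW (w.drop (w.length - k))) :=
          hconv _ (by omega) (by omega) (by omega)
        have hc3 : cAux m ((stdW (w.take (w.length - k))).reverse)
            = (-1) ^ ((w.take (w.length - k)).length + 1)
              * cAux m (stdW (w.take (w.length - k))) :=
          hconv _ (by omega) (by omega) (by omega)
        simp only [T1f, T2f, List.length_reverse, List.take_reverse, List.drop_reverse,
          List.mem_reverse, stdW_reverse]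
        rw [hc2, hc3, hd, ht, show w.length - (w.length - k) = k by omega]
        by_cases hc : w.length ∈ w.drop (w.length - k) ∧ 1 ∈ w.take (w.length - k)
        · rw [if_pos hc, if_pos ⟨hc.2, hc.1⟩]
          have hsign : ((-1 : MvPolynomial (Fin 2) ℤ)) ^ (k + 1) * (-1) ^ ((w.length - k) + 1)
              = (-1) ^ w.length := by
            rw [← pow_add, show k + 1 + ((w.length - k) + 1) = w.length + 2 by omega, pow_add]
            ring
          linear_combination (aW k * bW (w.length - k) * cAux m (stdW (w.drop (w.length - k)))
            * cAux m (stdW (w.take (w.length - k)))) * hsign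
        · rw [if_neg hc, if_neg (fun h => hc ⟨h.2, h.1⟩), mul_zero]
      have hrl : w.reverse.length = w.length := List.length_reverse (as := w)
      have hrev : cpol w.reverse = cAux (m + 1) w.reverse := by
        rw [cpol]
        exact cAux_fuel _ _ _ (le_refl _) (by omega)
      have hA : ∑ k ∈ Finset.Ioo 0 w.length, T1f m w.reverse k
          = (-1) ^ w.length * ∑ k ∈ Finset.Ioo 0 w.length, T2f m w k := by
        rw [Finset.sum_congr rfl key1, ← Finset.mul_sum,
          sum_Ioo_reflect w.length (T2f m w)]
      have hB : ∑ k ∈ Finset.Ioo 0 w.length, T2f m w.reverse k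
          = (-1) ^ w.length * ∑ k ∈ Finset.Ioo 0 w.length, T1f m w k := by
        rw [Finset.sum_congr rfl key2, ← Finset.mul_sum,
          sum_Ioo_reflect w.length (T1f m w)]
      have hcw : cpol w = (∑ k ∈ Finset.Ioo 0 w.length, T1f m w k)
          - ∑ k ∈ Finset.Ioo 0 w.length, T2f m w k := by
        rw [cpol, cAux_fuel w.length (m + 1) w (le_refl _) (by omega), cAux_succ m w h2]
      have hcr : cpol w.reverse = (∑ k ∈ Finset.Ioo 0 w.length, T1f m w.reverse k)
          - ∑ k ∈ Finset.Ioo 0 w.length, T2f m w.reverse k := by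
        rw [hrev, cAux_succ m w.reverse (by rw [hrl]; omega), hrl]
      rw [hcr, hA, hB, hcw, pow_succ]
      ring

theorem stmt3 : ∀ n : ℕ, 1 ≤ n → ∀ σ : Equiv.Perm (Fin n),
    cpol (permWord σ).reverse = (-1) ^ (n - 1) * cpol (permWord σ) := by
  intro n hn σ
  have hl : (permWord σ).length = n := by simp [permWord]
  have := cpol_rev_aux (permWord σ).length (permWord σ) (le_refl _) (by omega)
  rw [this, hl]
  have h2 : n + 1 = (n - 1) + 2 := by omega
  rw [h2, pow_add]
  ring
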